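/- For any u ∈ U and any λ ∈ ℝ^m, if there exists x ∈ X with G(x,u) = 0, then min_{x∈X} λᵀG(x,u) ≤ 0. Conversely, if u is such that inf_{x∈X} λᵀG(x,u) ≤ 0 for all λ ∈ ℝ^m, and X is compact convex with G(·,u) affine, then there exists x ∈ X with G(x,u) = 0. -/
import Mathlib


/-- Feasibility cuts: if `u` is feasible (`∃ x ∈ X, G(x,u) = 0`) then
`min_{x∈X} λᵀG(x,u) ≤ 0` for every `λ`; conversely, for `X` nonempty compact
convex and `G(·,u)` affine, if `inf_{x∈X} λᵀG(x,u) ≤ 0` for all `λ` then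
`u` is feasible. -/
theorem benders_feasibility_cuts {n m : ℕ} (X : Set (Fin n → ℝ))
    (hne : X.Nonempty) (hcpt : IsCompact X) (hconv : Convex ℝ X)
    (G : (Fin n → ℝ) → Fin m → ℝ)
    (haff : ∃ (L : (Fin n → ℝ) →ₗ[ℝ] (Fin m → ℝ)) (b : Fin m → ℝ),
      ∀ x, G x = L x + b) :
    ((∃ x ∈ X, G x = 0) →
      ∀ lam : Fin m → ℝ, sInf {r | ∃ x ∈ X, r = ∑ i, lam i * G x i} ≤ 0) ∧
    ((∀ lam : Fin m → ℝ, sInf {r | ∃ x ∈ X, r = ∑ i, lam i * G x i} ≤ 0) →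
      ∃ x ∈ X, G x = 0) := by
  obtain ⟨L, b, hG⟩ := haff
  have hGcont : Continuous G := by
    have h : Continuous fun x => L x + b :=
      (L.continuous_of_finiteDimensional).add continuous_const
    have : G = fun x => L x + b := funext hG
    rw [this]; exact h
  constructor
  · rintro ⟨x0, hx0, hGx0⟩ lam
    have hset : {r | ∃ x ∈ X, r = ∑ i, lam i * G x i}
        = (fun x => ∑ i, lam i * G x i) '' X := by
      ext r
      simp only [Set.mem_setOf_eq, Set.mem_image]
      constructor
      · rintro ⟨x, hx, rfl⟩; exact ⟨x, hx, rfl⟩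
      · rintro ⟨x, hx, rfl⟩; exact ⟨x, hx, rfl⟩
    have hcont : Continuous fun x => ∑ i, lam i * G x i :=
      continuous_finset_sum _ fun i _ =>
        continuous_const.mul ((continuous_apply i).comp hGcont)
    have hbdd : BddBelow {r | ∃ x ∈ X, r = ∑ i, lam i * G x i} := by
      rw [hset]; exact (hcpt.image hcont).bddBelow
    have h0 : (0 : ℝ) ∈ {r | ∃ x ∈ X, r = ∑ i, lam i * G x i} :=
      ⟨x0, hx0, by simp [hGx0]⟩
    exact csInf_le hbdd h0
  · intro h
    by_contra hcon
    push_neg at hcon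
    have h0S : (0 : Fin m → ℝ) ∉ G '' X := by
      rintro ⟨x, hx, hGx⟩; exact hcon x hx hGx
    have hSconv : Convex ℝ (G '' X) := by
      have himg : G '' X = (fun y => b + y) '' (L '' X) := by
        rw [Set.image_image]
        apply Set.image_congr
        intro x _; rw [hG x, add_comm]
      rw [himg]
      exact (hconv.linear_image L).translate b
    have hSclosed : IsClosed (G '' X) := (hcpt.image hGcont).isClosed
    obtain ⟨f, c, hfc, hsep⟩ :=
      geometric_hahn_banach_point_closed hSconv hSclosed h0S
    have hc : 0 < c := by simpa using hfc
    set lam : Fin m → ℝ := fun i => f (Pi.single i 1) with hlam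
    have hfy : ∀ y : Fin m → ℝ, f y = ∑ i, lam i * y i := by
      intro y
      have hy : y = ∑ i, y i • (Pi.single i 1 : Fin m → ℝ) := by
        ext j
        simp [Pi.single_apply, Finset.sum_apply, mul_ite]
      conv_lhs => rw [hy]
      rw [map_sum]
      apply Finset.sum_congr rfl
      intro i _
      rw [map_smul]
      simp [hlam, mul_comm]
    have hlow : ∀ r ∈ {r | ∃ x ∈ X, r = ∑ i, lam i * G x i}, c ≤ r := by
      rintro r ⟨x, hx, rfl⟩
      have := hsep (G x) ⟨x, hx, rfl⟩
      rw [hfy (G x)] at this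
      exact this.le
    have hge : c ≤ sInf {r | ∃ x ∈ X, r = ∑ i, lam i * G x i} := by
      apply le_csInf
      · obtain ⟨x, hx⟩ := hne
        exact ⟨_, x, hx, rfl⟩
      · exact hlow
    have := h lam
    linarith
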